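/- Let z, ν ∈ ℝ satisfy z² ≤ ν ≤ 1. If Φ : ℤ → ℝ is square-summable (i.e. ∑_{j∈ℤ} Φ_j² < ∞), then the sequence Ψ with Ψ_j := (A(z)Φ)_j is square-summable and ∑_{j∈ℤ} Ψ_j² ≤ ∑_{j∈ℤ} Φ_j²; that is, A(z) is a contraction on ℓ²(ℤ). -/

import Mathlib

/-- Backward difference `(DΦ)_j = Φ_j - Φ_{j-1}`. -/
noncomputable def Dd (Φ : ℤ → ℝ) (j : ℤ) : ℝ := Φ j - Φ (j - 1)

/-- Centered difference `(D₀Φ)_j = (Φ_{j+1} - Φ_{j-1})/2`. -/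
noncomputable def D0 (Φ : ℤ → ℝ) (j : ℤ) : ℝ := (Φ (j + 1) - Φ (j - 1)) / 2

/-- Discrete Laplacian `(ΔΦ)_j = Φ_{j-1} - 2Φ_j + Φ_{j+1}`. -/
noncomputable def Lap (Φ : ℤ → ℝ) (j : ℤ) : ℝ := Φ (j - 1) - 2 * Φ j + Φ (j + 1)

/-- The three point scheme `A(z)Φ = Φ - z D₀Φ + (ν/2) ΔΦ`. -/
noncomputable def A3 (z ν : ℝ) (Φ : ℤ → ℝ) (j : ℤ) : ℝ :=
  Φ j - z * D0 Φ j + ν / 2 * Lap Φ j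

private lemma abs_mul_le_half_sq (a b : ℝ) : |a * b| ≤ (a ^ 2 + b ^ 2) / 2 := by
  rw [abs_mul]
  nlinarith [sq_nonneg (|a| - |b|), sq_abs a, sq_abs b, abs_nonneg a, abs_nonneg b]

/-- For `z² ≤ ν ≤ 1`, the three point scheme is a contraction on `ℓ²(ℤ)`. -/
theorem three_point_contraction (z ν : ℝ) (h1 : z ^ 2 ≤ ν) (h2 : ν ≤ 1)
    (Φ : ℤ → ℝ) (hΦ : Summable (fun j : ℤ => (Φ j) ^ 2)) :
    Summable (fun j : ℤ => (A3 z ν Φ j) ^ 2) ∧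
      ∑' j : ℤ, (A3 z ν Φ j) ^ 2 ≤ ∑' j : ℤ, (Φ j) ^ 2 := by
  set α : ℝ := (ν - z) / 2 with hα
  set β : ℝ := (ν + z) / 2 with hβ
  set u : ℤ → ℝ := fun j => Φ j - Φ (j - 1) with hu
  -- shifted summabilities
  have hΦp : Summable (fun j : ℤ => (Φ (j + 1)) ^ 2) := by
    have := ((Equiv.addRight (1 : ℤ)).summable_iff (f := fun j : ℤ => (Φ j) ^ 2)).mpr hΦ
    simpa [Function.comp_def] using this
  have hΦm : Summable (fun j : ℤ => (Φ (j - 1)) ^ 2) := by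
    have := ((Equiv.subRight (1 : ℤ)).summable_iff (f := fun j : ℤ => (Φ j) ^ 2)).mpr hΦ
    simpa [Function.comp_def] using this
  have hu2 : Summable (fun j : ℤ => (u j) ^ 2) := by
    refine Summable.of_nonneg_of_le (f := fun j => 2 * (Φ j) ^ 2 + 2 * (Φ (j - 1)) ^ 2)
      (fun j => sq_nonneg _) (fun j => ?_) ((hΦ.mul_left 2).add (hΦm.mul_left 2))
    show (u j) ^ 2 ≤ 2 * (Φ j) ^ 2 + 2 * (Φ (j - 1)) ^ 2
    simp only [hu]; nlinarith [sq_nonneg (Φ j + Φ (j - 1))]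
  have hu2' : Summable (fun j : ℤ => (u (j + 1)) ^ 2) := by
    have := ((Equiv.addRight (1 : ℤ)).summable_iff (f := fun j : ℤ => (u j) ^ 2)).mpr hu2
    simpa [Function.comp_def] using this
  have hcross : ∀ j : ℤ, |u j * u (j + 1)| ≤ ((u j) ^ 2 + (u (j + 1)) ^ 2) / 2 :=
    fun j => abs_mul_le_half_sq (u j) (u (j + 1))
  have hT : Summable (fun j : ℤ => u j * u (j + 1)) := by
    apply Summable.of_abs
    exact Summable.of_nonneg_of_le (fun j => abs_nonneg _) hcross
      ((hu2.add hu2').div_const 2)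
  -- the key pointwise identity
  have key : ∀ j : ℤ, (A3 z ν Φ j) ^ 2 =
      (Φ j) ^ 2 + α * ((Φ (j + 1)) ^ 2 - (Φ j) ^ 2) + β * ((Φ (j - 1)) ^ 2 - (Φ j) ^ 2)
        + (α ^ 2 - α) * (u (j + 1)) ^ 2 + (β ^ 2 - β) * (u j) ^ 2
        - 2 * α * β * (u j * u (j + 1)) := by
    intro j
    simp only [A3, D0, Lap, hu, hα, hβ]
    have : (j : ℤ) + 1 - 1 = j := by ring
    rw [this]
    ring
  -- summability of the RHS pieces
  have hs1 : Summable (fun j : ℤ => (Φ (j + 1)) ^ 2 - (Φ j) ^ 2) := hΦp.sub hΦ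
  have hs2 : Summable (fun j : ℤ => (Φ (j - 1)) ^ 2 - (Φ j) ^ 2) := hΦm.sub hΦ
  have hRHS : Summable (fun j : ℤ =>
      (Φ j) ^ 2 + α * ((Φ (j + 1)) ^ 2 - (Φ j) ^ 2) + β * ((Φ (j - 1)) ^ 2 - (Φ j) ^ 2)
        + (α ^ 2 - α) * (u (j + 1)) ^ 2 + (β ^ 2 - β) * (u j) ^ 2
        - 2 * α * β * (u j * u (j + 1))) :=
    ((((hΦ.add (hs1.mul_left α)).add (hs2.mul_left β)).add
      (hu2'.mul_left (α ^ 2 - α))).add (hu2.mul_left (β ^ 2 - β))).sub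
      (hT.mul_left (2 * α * β))
  have hΨ : Summable (fun j : ℤ => (A3 z ν Φ j) ^ 2) := hRHS.congr (fun j => (key j).symm)
  refine ⟨hΨ, ?_⟩
  -- compute the tsum
  have htsum : ∑' j : ℤ, (A3 z ν Φ j) ^ 2 =
      ∑' j : ℤ, (Φ j) ^ 2 + α * ∑' j : ℤ, ((Φ (j + 1)) ^ 2 - (Φ j) ^ 2)
        + β * ∑' j : ℤ, ((Φ (j - 1)) ^ 2 - (Φ j) ^ 2)
        + (α ^ 2 - α) * ∑' j : ℤ, (u (j + 1)) ^ 2 + (β ^ 2 - β) * ∑' j : ℤ, (u j) ^ 2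
        - 2 * α * β * ∑' j : ℤ, (u j * u (j + 1)) := by
    rw [tsum_congr key]
    rw [Summable.tsum_sub ((((hΦ.add (hs1.mul_left α)).add (hs2.mul_left β)).add
      (hu2'.mul_left (α ^ 2 - α))).add (hu2.mul_left (β ^ 2 - β)))
      (hT.mul_left (2 * α * β))]
    rw [Summable.tsum_add (((hΦ.add (hs1.mul_left α)).add (hs2.mul_left β)).add
      (hu2'.mul_left (α ^ 2 - α))) (hu2.mul_left (β ^ 2 - β))]
    rw [Summable.tsum_add ((hΦ.add (hs1.mul_left α)).add (hs2.mul_left β))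
      (hu2'.mul_left (α ^ 2 - α))]
    rw [Summable.tsum_add (hΦ.add (hs1.mul_left α)) (hs2.mul_left β)]
    rw [Summable.tsum_add hΦ (hs1.mul_left α)]
    rw [tsum_mul_left, tsum_mul_left, tsum_mul_left, tsum_mul_left, tsum_mul_left]
  -- telescoping sums vanish
  have htel1 : ∑' j : ℤ, ((Φ (j + 1)) ^ 2 - (Φ j) ^ 2) = 0 := by
    rw [Summable.tsum_sub hΦp hΦ]
    have h := (Equiv.addRight (1 : ℤ)).tsum_eq (fun j : ℤ => (Φ j) ^ 2)
    simp only [Equiv.coe_addRight] at h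
    rw [h]; ring
  have htel2 : ∑' j : ℤ, ((Φ (j - 1)) ^ 2 - (Φ j) ^ 2) = 0 := by
    rw [Summable.tsum_sub hΦm hΦ]
    have : ∑' j : ℤ, (Φ (j - 1)) ^ 2 = ∑' j : ℤ, (Φ j) ^ 2 := by
      have := (Equiv.subRight (1 : ℤ)).tsum_eq (fun j : ℤ => (Φ j) ^ 2)
      simpa using this
    rw [this]; ring
  have hshiftu : ∑' j : ℤ, (u (j + 1)) ^ 2 = ∑' j : ℤ, (u j) ^ 2 := by
    have h := (Equiv.addRight (1 : ℤ)).tsum_eq (fun j : ℤ => (u j) ^ 2)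
    simp only [Equiv.coe_addRight] at h
    exact h
  set S : ℝ := ∑' j : ℤ, (u j) ^ 2 with hS
  set T : ℝ := ∑' j : ℤ, (u j * u (j + 1)) with hTdef
  rw [htsum, htel1, htel2, hshiftu]
  -- bounds on T
  have hSnn : 0 ≤ S := tsum_nonneg (fun j => sq_nonneg _)
  have hTS : T ≤ S := by
    have h := Summable.tsum_le_tsum (f := fun j => u j * u (j + 1))
      (g := fun j => ((u j) ^ 2 + (u (j + 1)) ^ 2) / 2)
      (fun j => (le_abs_self _).trans (hcross j)) hT ((hu2.add hu2').div_const 2)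
    have h2 : ∑' j : ℤ, ((u j) ^ 2 + (u (j + 1)) ^ 2) / 2 = S := by
      rw [tsum_div_const, Summable.tsum_add hu2 hu2', hshiftu, hS]; ring
    rw [h2] at h; exact h
  have hTS' : -S ≤ T := by
    have h := Summable.tsum_le_tsum (f := fun j => -(((u j) ^ 2 + (u (j + 1)) ^ 2) / 2))
      (g := fun j => u j * u (j + 1))
      (fun j => by
        have h1 := hcross j; have h2 := neg_abs_le (u j * u (j + 1))
        show -(((u j) ^ 2 + (u (j + 1)) ^ 2) / 2) ≤ u j * u (j + 1)
        exact le_trans (neg_le_neg h1) h2)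
      (((hu2.add hu2').div_const 2).neg) hT
    have h2 : ∑' j : ℤ, -(((u j) ^ 2 + (u (j + 1)) ^ 2) / 2) = -S := by
      rw [tsum_neg, tsum_div_const, Summable.tsum_add hu2 hu2', hshiftu, hS]; ring
    rw [h2] at h; exact h
  -- final arithmetic
  have hab : α + β = ν := by rw [hα, hβ]; ring
  have hab2 : α ^ 2 + β ^ 2 = (ν ^ 2 + z ^ 2) / 2 := by rw [hα, hβ]; ring
  have hab3 : α * β = (ν ^ 2 - z ^ 2) / 4 := by rw [hα, hβ]; ring
  have hν0 : 0 ≤ ν := le_trans (sq_nonneg z) h1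
  have hfin : (α ^ 2 - α) * S + (β ^ 2 - β) * S - 2 * α * β * T ≤ 0 := by
    rw [hα, hβ]
    nlinarith [mul_nonneg (mul_nonneg hν0 (by linarith : (0:ℝ) ≤ 1 - ν))
        (by linarith : 0 ≤ S - T),
      mul_nonneg (by linarith : (0:ℝ) ≤ ν - z ^ 2) (by linarith : 0 ≤ S + T)]
  have : α * 0 + β * 0 = 0 := by ring
  linarith [this]
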